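/- arXiv:0802.2157 — 2 statements merged into one kernel-verified Lean document; each statement's English description precedes it below -/
import Mathlib

section
/- If a finite simple graph G is strongly k-choosable, then G is strongly km-choosable for every positive integer m. -/
/-- A graph `G` is `(a:b)`-choosable if for every assignment of color sets of size `a`
to the vertices, one can choose subsets of size `b` that are disjoint on adjacent vertices. -/
def SimpleGraph.Choosable {V : Type*} (G : SimpleGraph V) (a b : ℕ) : Prop :=
  ∀ S : V → Finset ℕ, (∀ v, (S v).card = a) →
    ∃ C : V → Finset ℕ, (∀ v, C v ⊆ S v) ∧ (∀ v, (C v).card = b) ∧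
      ∀ u v, G.Adj u v → Disjoint (C u) (C v)

/-- The `k`-th choice number of `G`: the least `n` such that `G` is `(n:k)`-choosable. -/
noncomputable def SimpleGraph.chooseNum {V : Type*} (G : SimpleGraph V) (k : ℕ) : ℕ :=
  sInf {n | G.Choosable n k}

/-- The graph obtained from `G` by adding all edges inside each member of a family `P`
of subsets of the vertices. -/
def SimpleGraph.addCliques {V : Type*} (G : SimpleGraph V) (P : Set (Set V)) :
    SimpleGraph V :=
  G ⊔ SimpleGraph.fromRel (fun u v => ∃ A ∈ P, u ∈ A ∧ v ∈ A)

/-- `G` is strongly `k`-colorable if every graph obtained from `G` by adding a union of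
vertex-disjoint cliques of size at most `k` is `k`-colorable. -/
def SimpleGraph.StronglyColorable {V : Type*} (G : SimpleGraph V) (k : ℕ) : Prop :=
  ∀ P : Set (Set V), P.PairwiseDisjoint id → (∀ A ∈ P, A.ncard ≤ k) →
    (G.addCliques P).Colorable k

/-- `G` is strongly `k`-choosable if every graph obtained from `G` by adding a union of
vertex-disjoint cliques of size at most `k` is `k`-choosable. -/
def SimpleGraph.StronglyChoosable {V : Type*} (G : SimpleGraph V) (k : ℕ) : Prop :=
  ∀ P : Set (Set V), P.PairwiseDisjoint id → (∀ A ∈ P, A.ncard ≤ k) →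
    (G.addCliques P).Choosable k 1

open Finset in
lemma extract_part {V : Type*} [DecidableEq V] (k : ℕ) (hk : 0 < k) (A : Finset V)
    (S : V → Finset ℕ) (hA : k < A.card) (hS : ∀ v ∈ A, k ≤ (S v).card) :
    ∃ B ⊆ A, B.card = k ∧ ∃ W : Finset ℕ,
      (∀ v ∈ B, k ≤ (S v ∩ W).card) ∧ (∀ u ∈ A, u ∉ B → (S u ∩ W).card ≤ k) := by
  classical
  set U : Finset ℕ := A.sup S with hU
  set Pw : Finset (Finset ℕ) :=
    U.powerset.filter (fun W => k ≤ (A.filter (fun v => k ≤ (S v ∩ W).card)).card) with hPw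
  have hUPw : U ∈ Pw := by
    rw [hPw, mem_filter, mem_powerset]
    refine ⟨le_refl _, ?_⟩
    have : A.filter (fun v => k ≤ (S v ∩ U).card) = A := by
      apply filter_true_of_mem
      intro v hv
      have hsub : S v ⊆ U := le_sup hv
      rw [inter_eq_left.mpr hsub]
      exact hS v hv
    rw [this]; exact hA.le
  obtain ⟨W, hWPw, hWmin⟩ := Finset.exists_min_image Pw card ⟨U, hUPw⟩
  rw [hPw, mem_filter, mem_powerset] at hWPw
  obtain ⟨hWU, hWbig⟩ := hWPw
  have hWne : W.Nonempty := by
    rcases W.eq_empty_or_nonempty with rfl | hne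
    · exfalso
      have : A.filter (fun v => k ≤ (S v ∩ (∅ : Finset ℕ)).card) = ∅ := by
        apply filter_false_of_mem
        intro v _
        simp [hk.le, Nat.lt_iff_add_one_le]
        omega
      rw [this] at hWbig
      simp at hWbig; omega
    · exact hne
  obtain ⟨c, hc⟩ := hWne
  have hW'small : (A.filter (fun v => k ≤ (S v ∩ W.erase c).card)).card < k := by
    by_contra hcon
    push_neg at hcon
    have hmem : W.erase c ∈ Pw := by
      rw [hPw, mem_filter, mem_powerset]
      exact ⟨(erase_subset c W).trans hWU, hcon⟩
    have := hWmin _ hmem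
    rw [card_erase_of_mem hc] at this
    have hpos : 0 < W.card := card_pos.mpr ⟨c, hc⟩
    omega
  set D : Finset V := A.filter (fun v => k + 1 ≤ (S v ∩ W).card) with hD
  have hDsub : D ⊆ A.filter (fun v => k ≤ (S v ∩ W.erase c).card) := by
    intro v hv
    rw [hD, mem_filter] at hv
    rw [mem_filter]
    refine ⟨hv.1, ?_⟩
    have h1 : (S v ∩ W).erase c ⊆ S v ∩ W.erase c := by
      intro x hx
      rw [mem_erase] at hx
      rw [mem_inter] at hx ⊢
      exact ⟨hx.2.1, mem_erase.mpr ⟨hx.1, hx.2.2⟩⟩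
    have h2 : (S v ∩ W).card - 1 ≤ ((S v ∩ W).erase c).card := by
      rcases em (c ∈ S v ∩ W) with hcm | hcm
      · rw [card_erase_of_mem hcm]
      · rw [erase_eq_of_notMem hcm]; omega
    have := card_le_card h1
    omega
  have hDk : D.card < k := lt_of_le_of_lt (card_le_card hDsub) hW'small
  set F : Finset V := A.filter (fun v => k ≤ (S v ∩ W).card) with hF
  have hDF : D ⊆ F := by
    intro v hv
    rw [hD, mem_filter] at hv
    rw [hF, mem_filter]
    exact ⟨hv.1, by omega⟩
  have hFcard : k ≤ F.card := by rw [hF]; exact hWbig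
  obtain ⟨B, hDB, hBF, hBcard⟩ := Finset.exists_subsuperset_card_eq (n := k - D.card + D.card) hDF
    (by omega) (by omega)
  have hBk : B.card = k := by rw [hBcard]; omega
  refine ⟨B, hBF.trans (filter_subset _ _), hBk, W, ?_, ?_⟩
  · intro v hv
    have := hBF hv
    rw [hF, mem_filter] at this
    exact this.2
  · intro u hu hub
    by_contra hcon
    push_neg at hcon
    have : u ∈ D := by rw [hD, mem_filter]; exact ⟨hu, hcon⟩
    exact hub (hDB this)

open Finset in
lemma palette_split {V : Type*} [DecidableEq V] (k : ℕ) (hk : 0 < k) :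
    ∀ (m : ℕ) (A : Finset V) (S : V → Finset ℕ), A.card ≤ k * m →
      (∀ v ∈ A, k * m ≤ (S v).card) →
      ∃ (g : V → ℕ) (T : V → Finset ℕ),
        (∀ v ∈ A, T v ⊆ S v ∧ (T v).card = k) ∧
        (∀ u ∈ A, ∀ v ∈ A, g u ≠ g v → Disjoint (T u) (T v)) ∧
        (∀ j, (A.filter (fun v => g v = j)).card ≤ k) := by
  classical
  intro m
  induction m with
  | zero =>
    intro A S hA _
    simp only [Nat.mul_zero, Nat.le_zero, card_eq_zero] at hA
    subst hA
    exact ⟨fun _ => 0, fun _ => ∅, by simp, by simp, by simp [hk.le]⟩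
  | succ m ih =>
    intro A S hA hS
    by_cases hAk : A.card ≤ k
    · -- single part
      have hkS : ∀ v ∈ A, k ≤ (S v).card := fun v hv =>
        le_trans (Nat.le_mul_of_pos_right k (Nat.succ_pos m)) (hS v hv)
      refine ⟨fun _ => 0,
        fun v => if h : v ∈ A then (Finset.exists_subset_card_eq (s := S v) (n := k) (hkS v h)).choose else ∅,
        ?_, ?_, ?_⟩
      · intro v hv
        dsimp only
        rw [dif_pos hv]
        obtain ⟨h1, h2⟩ := (Finset.exists_subset_card_eq (s := S v) (n := k) (hkS v hv)).choose_spec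
        exact ⟨h1, h2⟩
      · intro u _ v _ hg; exact absurd rfl hg
      · intro j
        rcases em (j = 0) with rfl | hj
        · simpa using hAk
        · have : A.filter (fun _ => (0 : ℕ) = j) = ∅ :=
            filter_false_of_mem (fun v _ => fun hc => hj hc.symm)
          simp [this, hk.le, Ne.symm hj]
    · push_neg at hAk
      have hkS : ∀ v ∈ A, k ≤ (S v).card := fun v hv =>
        le_trans (Nat.le_mul_of_pos_right k (Nat.succ_pos m)) (hS v hv)
      obtain ⟨B, hBA, hBk, W, hBW, hout⟩ := extract_part k hk A S hAk hkS
      have hA' : (A \ B).card ≤ k * m := by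
        rw [card_sdiff_of_subset hBA]
        have := hA
        rw [Nat.mul_succ] at this
        omega
      have hS' : ∀ v ∈ A \ B, k * m ≤ (S v \ W).card := by
        intro v hv
        rw [mem_sdiff] at hv
        have h1 := hS v hv.1
        have h2 := hout v hv.1 hv.2
        have h3 := Finset.card_inter_add_card_sdiff (S v) W
        rw [Nat.mul_succ] at h1
        omega
      obtain ⟨g', T', hT', hdisj', hparts'⟩ := ih (A \ B) (fun v => S v \ W) hA' hS'
      refine ⟨fun v => if v ∈ B then 0 else g' v + 1,
        fun v => if h : v ∈ B then (Finset.exists_subset_card_eq (s := S v ∩ W) (n := k) (hBW v h)).choose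
          else T' v, ?_, ?_, ?_⟩
      · intro v hv
        dsimp only
        by_cases hvB : v ∈ B
        · rw [dif_pos hvB]
          obtain ⟨h1, h2⟩ := (Finset.exists_subset_card_eq (s := S v ∩ W) (n := k) (hBW v hvB)).choose_spec
          exact ⟨h1.trans inter_subset_left, h2⟩
        · rw [dif_neg hvB]
          obtain ⟨h1, h2⟩ := hT' v (mem_sdiff.mpr ⟨hv, hvB⟩)
          exact ⟨h1.trans sdiff_subset, h2⟩
      · intro u hu v hv hg
        dsimp only
        dsimp only at hg
        by_cases huB : u ∈ B <;> by_cases hvB : v ∈ B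
        · rw [if_pos huB, if_pos hvB] at hg; exact absurd rfl hg
        · rw [dif_pos huB, dif_neg hvB]
          have h1 := (Finset.exists_subset_card_eq (s := S u ∩ W) (n := k) (hBW u huB)).choose_spec.1
          have h2 := (hT' v (mem_sdiff.mpr ⟨hv, hvB⟩)).1
          rw [Finset.disjoint_left]
          intro x hxu hxv
          have hxW : x ∈ W := (mem_inter.mp (h1 hxu)).2
          have : x ∈ S v \ W := h2 hxv
          exact (mem_sdiff.mp this).2 hxW
        · rw [dif_neg huB, dif_pos hvB]
          have h1 := (Finset.exists_subset_card_eq (s := S v ∩ W) (n := k) (hBW v hvB)).choose_spec.1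
          have h2 := (hT' u (mem_sdiff.mpr ⟨hu, huB⟩)).1
          rw [Finset.disjoint_left]
          intro x hxu hxv
          have hxW : x ∈ W := (mem_inter.mp (h1 hxv)).2
          have : x ∈ S u \ W := h2 hxu
          exact (mem_sdiff.mp this).2 hxW
        · rw [if_neg huB, if_neg hvB] at hg
          rw [dif_neg huB, dif_neg hvB]
          exact hdisj' u (mem_sdiff.mpr ⟨hu, huB⟩) v (mem_sdiff.mpr ⟨hv, hvB⟩)
            (fun hc => hg (by rw [hc]))
      · intro j
        rcases j with _ | j
        · have hsub : A.filter (fun v => (if v ∈ B then 0 else g' v + 1) = 0) ⊆ B := by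
            intro v hv
            rw [mem_filter] at hv
            by_contra hvB
            rw [if_neg hvB] at hv
            omega
          calc _ ≤ B.card := card_le_card hsub
            _ = k := hBk
        · have hsub : A.filter (fun v => (if v ∈ B then 0 else g' v + 1) = j + 1) ⊆
              (A \ B).filter (fun v => g' v = j) := by
            intro v hv
            rw [mem_filter] at hv
            rw [mem_filter, mem_sdiff]
            by_cases hvB : v ∈ B
            · rw [if_pos hvB] at hv; omega
            · rw [if_neg hvB] at hv
              exact ⟨⟨hv.1, hvB⟩, by omega⟩
          exact le_trans (card_le_card hsub) (hparts' j)

theorem stronglyChoosable_mul {V : Type*} [Fintype V] (G : SimpleGraph V) (k m : ℕ)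
    (hm : 0 < m) (h : G.StronglyChoosable k) :
    G.StronglyChoosable (k * m) := by
  classical
  rcases Nat.eq_zero_or_pos k with rfl | hk
  · -- degenerate case k = 0
    intro P hPd hPc S hS
    rcases isEmpty_or_nonempty V with hV | hV
    · exact ⟨fun _ => ∅, fun v => (IsEmpty.false v).elim, fun v => (IsEmpty.false v).elim,
        fun u _ _ => (IsEmpty.false u).elim⟩
    · exfalso
      obtain ⟨v0⟩ := hV
      obtain ⟨C, hC1, hC2, -⟩ := h ∅ (by simp [Set.PairwiseDisjoint]) (by simp)
        (fun _ => ∅) (fun _ => rfl)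
      have h1 := hC1 v0
      rw [Finset.subset_empty] at h1
      have h2 := hC2 v0
      rw [h1] at h2
      simp at h2
  · intro P hPd hPc S hS
    have key : ∀ A ∈ P, ∃ (g : V → ℕ) (T : V → Finset ℕ),
        (∀ v ∈ A, T v ⊆ S v ∧ (T v).card = k) ∧
        (∀ u ∈ A, ∀ v ∈ A, g u ≠ g v → Disjoint (T u) (T v)) ∧
        (∀ j : ℕ, ({v | v ∈ A ∧ g v = j} : Set V).ncard ≤ k) := by
      intro A hA
      have hfin : A.Finite := A.toFinite
      have hc1 : hfin.toFinset.card ≤ k * m := by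
        rw [← Set.ncard_eq_toFinset_card A hfin]
        exact hPc A hA
      have hc2 : ∀ v ∈ hfin.toFinset, k * m ≤ (S v).card := by
        intro v _
        rw [hS v]
      obtain ⟨g, T, hT, hdT, hpT⟩ := palette_split k hk m hfin.toFinset S hc1 hc2
      refine ⟨g, T, fun v hv => hT v (hfin.mem_toFinset.mpr hv),
        fun u hu v hv => hdT u (hfin.mem_toFinset.mpr hu) v (hfin.mem_toFinset.mpr hv), ?_⟩
      intro j
      have hset : ({v | v ∈ A ∧ g v = j} : Set V) =
          ↑(hfin.toFinset.filter (fun v => g v = j)) := by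
        ext v
        simp [Set.Finite.mem_toFinset, Set.mem_setOf_eq]
      rw [hset, Set.ncard_coe_finset]
      exact hpT j
    choose! g T hT hdisjT hparts using key
    have huniq : ∀ {A B : Set V}, A ∈ P → B ∈ P → ∀ {v : V}, v ∈ A → v ∈ B → A = B := by
      intro A B hA hB v hvA hvB
      by_contra hne
      exact Set.disjoint_left.mp (hPd hA hB hne) hvA hvB
    have hdef : ∀ v : V, ∃ t ⊆ S v, t.card = k := fun v =>
      Finset.exists_subset_card_eq (s := S v) (n := k) (by rw [hS v]; exact Nat.le_mul_of_pos_right k hm)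
    choose T0 hT0sub hT0card using hdef
    set S' : V → Finset ℕ := fun v => if hv : ∃ A ∈ P, v ∈ A then T hv.choose v else T0 v
      with hS'def
    have hS'sub : ∀ v, S' v ⊆ S v ∧ (S' v).card = k := by
      intro v
      by_cases hv : ∃ A ∈ P, v ∈ A
      · simp only [hS'def, dif_pos hv]
        exact hT hv.choose hv.choose_spec.1 v hv.choose_spec.2
      · simp only [hS'def, dif_neg hv]
        exact ⟨hT0sub v, hT0card v⟩
    have hSA : ∀ {A : Set V} {v : V}, A ∈ P → v ∈ A → S' v = T A v := by
      intro A v hA hv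
      have hv' : ∃ B ∈ P, v ∈ B := ⟨A, hA, hv⟩
      have e1 : S' v = T hv'.choose v := by simp only [hS'def]; rw [dif_pos hv']
      rw [e1, huniq hv'.choose_spec.1 hA hv'.choose_spec.2 hv]
    set P'' : Set (Set V) := {B | ∃ A ∈ P, ∃ j : ℕ, B = {v | v ∈ A ∧ g A v = j}} with hP''def
    have hP''d : P''.PairwiseDisjoint id := by
      intro B1 hB1 B2 hB2 hne
      obtain ⟨A1, hA1, j1, rfl⟩ := hB1
      obtain ⟨A2, hA2, j2, rfl⟩ := hB2
      simp only [Function.onFun, id]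
      by_cases hAA : A1 = A2
      · subst hAA
        have hj : j1 ≠ j2 := fun hj => hne (by rw [hj])
        rw [Set.disjoint_left]
        rintro v ⟨-, hg1⟩ ⟨-, hg2⟩
        exact hj (hg1 ▸ hg2 ▸ rfl)
      · exact (hPd hA1 hA2 hAA).mono (fun v hv => hv.1) (fun v hv => hv.1)
    have hP''c : ∀ B ∈ P'', B.ncard ≤ k := by
      rintro B ⟨A, hA, j, rfl⟩
      exact hparts A hA j
    obtain ⟨C, hC1, hC2, hC3⟩ := h P'' hP''d hP''c S' (fun v => (hS'sub v).2)
    refine ⟨C, fun v => (hC1 v).trans (hS'sub v).1, hC2, ?_⟩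
    have main : ∀ u v : V, u ≠ v → (∃ A ∈ P, u ∈ A ∧ v ∈ A) → Disjoint (C u) (C v) := by
      rintro u v hne ⟨A, hA, hu, hv⟩
      by_cases hg : g A u = g A v
      · apply hC3
        rw [SimpleGraph.addCliques, SimpleGraph.sup_adj, SimpleGraph.fromRel_adj]
        right
        exact ⟨hne, Or.inl ⟨{x | x ∈ A ∧ g A x = g A u}, ⟨A, hA, g A u, rfl⟩,
          ⟨hu, rfl⟩, ⟨hv, hg.symm⟩⟩⟩
      · have hd := hdisjT A hA u hu v hv hg
        have e1 := hSA hA hu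
        have e2 := hSA hA hv
        exact hd.mono (by rw [← e1]; exact hC1 u) (by rw [← e2]; exact hC1 v)
    intro u v huv
    rw [SimpleGraph.addCliques, SimpleGraph.sup_adj, SimpleGraph.fromRel_adj] at huv
    rcases huv with hG | ⟨hne, hrel⟩
    · exact hC3 u v (by rw [SimpleGraph.addCliques, SimpleGraph.sup_adj]; exact Or.inl hG)
    · rcases hrel with h1 | h1
      · exact main u v hne h1
      · exact (main v u hne.symm h1).symm
end

section
/- For every d ≥ 1 the strong chromatic number satisfies sχ(d) ≥ 2d; that is, there exists a finite simple graph G with maximum degree at most d that is not strongly (2d−1)-colorable. -/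
theorem strong_chromatic_number_lower_bound (d : ℕ) (hd : 1 ≤ d) :
    ∃ (V : Type) (_ : Fintype V) (G : SimpleGraph V),
      (∀ v : V, (G.neighborSet v).ncard ≤ d) ∧
      ¬ G.StronglyColorable (2 * d - 1) := by
  refine ⟨Fin d ⊕ Fin d, inferInstance, completeBipartiteGraph (Fin d) (Fin d), ?_, ?_⟩
  · intro v
    have hinl : Set.ncard (Set.range (Sum.inl : Fin d → Fin d ⊕ Fin d)) = d := by
      rw [← Nat.card_coe_set_eq, Nat.card_range_of_injective Sum.inl_injective,
        Nat.card_eq_fintype_card, Fintype.card_fin]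
    have hinr : Set.ncard (Set.range (Sum.inr : Fin d → Fin d ⊕ Fin d)) = d := by
      rw [← Nat.card_coe_set_eq, Nat.card_range_of_injective Sum.inr_injective,
        Nat.card_eq_fintype_card, Fintype.card_fin]
    cases v with
    | inl a =>
        have : (completeBipartiteGraph (Fin d) (Fin d)).neighborSet (Sum.inl a)
            = Set.range (Sum.inr : Fin d → Fin d ⊕ Fin d) := by
          ext w; cases w <;> simp [SimpleGraph.neighborSet]
        rw [this, hinr]
    | inr a =>
        have : (completeBipartiteGraph (Fin d) (Fin d)).neighborSet (Sum.inr a)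
            = Set.range (Sum.inl : Fin d → Fin d ⊕ Fin d) := by
          ext w; cases w <;> simp [SimpleGraph.neighborSet]
        rw [this, hinl]
  · intro h
    have hdisj : ({Set.range (Sum.inl : Fin d → Fin d ⊕ Fin d),
        Set.range (Sum.inr : Fin d → Fin d ⊕ Fin d)} : Set (Set (Fin d ⊕ Fin d))).PairwiseDisjoint id := by
      intro A hA B hB hAB
      rcases hA with rfl | rfl <;> rcases hB with rfl | rfl <;>
        first
          | exact absurd rfl hAB
          | simp [Function.onFun, Set.disjoint_left]
    have hcard : ∀ A ∈ ({Set.range (Sum.inl : Fin d → Fin d ⊕ Fin d),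
        Set.range (Sum.inr : Fin d → Fin d ⊕ Fin d)} : Set (Set (Fin d ⊕ Fin d))),
        A.ncard ≤ 2 * d - 1 := by
      intro A hA
      have h1 : Set.ncard (Set.range (Sum.inl : Fin d → Fin d ⊕ Fin d)) = d := by
        rw [← Nat.card_coe_set_eq, Nat.card_range_of_injective Sum.inl_injective,
          Nat.card_eq_fintype_card, Fintype.card_fin]
      have h2 : Set.ncard (Set.range (Sum.inr : Fin d → Fin d ⊕ Fin d)) = d := by
        rw [← Nat.card_coe_set_eq, Nat.card_range_of_injective Sum.inr_injective,
          Nat.card_eq_fintype_card, Fintype.card_fin]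
      rcases hA with rfl | rfl <;> simp only [h1, h2] <;> omega
    have hcol := h _ hdisj hcard
    have htop : (completeBipartiteGraph (Fin d) (Fin d)).addCliques
        {Set.range (Sum.inl : Fin d → Fin d ⊕ Fin d),
         Set.range (Sum.inr : Fin d → Fin d ⊕ Fin d)} = ⊤ := by
      ext u v
      simp only [SimpleGraph.addCliques, SimpleGraph.sup_adj, SimpleGraph.fromRel_adj,
        SimpleGraph.top_adj, Set.mem_insert_iff, Set.mem_singleton_iff]
      constructor
      · rintro (h | ⟨hne, _⟩)
        · rintro rfl; cases u <;> simp at h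
        · exact hne
      · intro hne
        cases u with
        | inl a =>
          cases v with
          | inl b => exact Or.inr ⟨hne, Or.inl ⟨Set.range Sum.inl, Or.inl rfl, ⟨a, rfl⟩, ⟨b, rfl⟩⟩⟩
          | inr b => left; simp
        | inr a =>
          cases v with
          | inl b => left; simp
          | inr b => exact Or.inr ⟨hne, Or.inl ⟨Set.range Sum.inr, Or.inr rfl, ⟨a, rfl⟩, ⟨b, rfl⟩⟩⟩
    rw [htop] at hcol
    obtain ⟨C⟩ := hcol
    have hinj : Function.Injective C := by
      intro u v huv
      by_contra hne
      exact C.valid (by simpa using hne) huv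
    have := Fintype.card_le_of_injective C hinj
    simp [Fintype.card_sum] at this
    omega
end
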